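/- Let F be a strictly 2-balanced graph. If H is the union of two distinct copies of F that intersect in at least two common edges, then d₂(H) > d₂(F). -/

import Mathlib

open SimpleGraph

/-- `d2v v e` : the `2`-density of a graph with `v` vertices and `e ≥ 1` edges. -/
noncomputable def d2v (v e : ℕ) : ℝ :=
  if 3 ≤ v then ((e : ℝ) - 1) / ((v : ℝ) - 2) else 1

/-- The `2`-density of a graph (given as a subgraph of the complete graph on `ℕ`). -/
noncomputable def d2 (H : Subgraph (⊤ : SimpleGraph ℕ)) : ℝ :=
  d2v H.verts.ncard H.edgeSet.ncard

/-- A graph `F` (with at least two edges) is strictly `2`-balanced if every proper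
subgraph with at least one edge has strictly smaller `2`-density. -/
def Strictly2Balanced (F : Subgraph (⊤ : SimpleGraph ℕ)) : Prop :=
  2 ≤ F.edgeSet.ncard ∧
  ∀ F' ≤ F, F' ≠ F → F'.edgeSet.Nonempty → d2 F' < d2 F


lemma edgeSet_map' {V W : Type*} {G : SimpleGraph V} {G' : SimpleGraph W}
    (f : G →g G') (H : G.Subgraph) :
    (H.map f).edgeSet = Sym2.map f '' H.edgeSet := by
  ext e
  refine Sym2.ind (fun x y => ?_) e
  simp only [Subgraph.mem_edgeSet, Subgraph.map_adj, Relation.Map, Set.mem_image]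
  constructor
  · rintro ⟨a, b, hab, hx, hy⟩
    exact ⟨s(a, b), hab, by rw [Sym2.map_pair_eq, hx, hy]⟩
  · rintro ⟨e', he', hm⟩
    induction e' with
    | _ a b =>
      rw [Sym2.map_pair_eq, Sym2.eq_iff] at hm
      rcases hm with ⟨hx, hy⟩ | ⟨hy, hx⟩
      · exact ⟨a, b, he', hx, hy⟩
      · exact ⟨b, a, he'.symm, hx, hy⟩

lemma edgeSet_finite' {V : Type*} {G : SimpleGraph V} (A : G.Subgraph)
    (h : A.verts.Finite) : A.edgeSet.Finite := by
  rw [← A.image_coe_edgeSet_coe]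
  haveI := h.to_subtype
  exact (Set.toFinite _).image _

lemma three_le_verts' {V : Type*} {G : SimpleGraph V} (A : G.Subgraph)
    (hfin : A.verts.Finite) (h2 : 2 ≤ A.edgeSet.ncard) : 3 ≤ A.verts.ncard := by
  by_contra h
  push_neg at h
  have hsub : ∀ a ∈ A.edgeSet, ∀ b ∈ A.edgeSet, a = b := by
    have hv2 : A.verts.ncard ≤ 2 := by omega
    intro e₁ he₁ e₂ he₂
    induction e₁ with
    | _ a b =>
    induction e₂ with
    | _ c d =>
      rw [Subgraph.mem_edgeSet] at he₁ he₂
      have hab : a ≠ b := (A.adj_sub he₁).ne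
      have hcd : c ≠ d := (A.adj_sub he₂).ne
      have hsub1 : ({a, b} : Set V) ⊆ A.verts :=
        Set.insert_subset_iff.mpr ⟨he₁.fst_mem, Set.singleton_subset_iff.mpr he₁.snd_mem⟩
      have hcard : ({a, b} : Set V).ncard = 2 := Set.ncard_pair hab
      have hveq : ({a, b} : Set V) = A.verts :=
        Set.eq_of_subset_of_ncard_le hsub1 (by omega) hfin
      have hc : c ∈ ({a, b} : Set V) := hveq ▸ he₂.fst_mem
      have hd : d ∈ ({a, b} : Set V) := hveq ▸ he₂.snd_mem
      obtain rfl | rfl := hc <;> obtain rfl | rfl := hd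
      · exact absurd rfl hcd
      · rfl
      · exact Sym2.eq_swap.symm
      · exact absurd rfl hcd
  have := (Set.ncard_le_one (edgeSet_finite' A hfin)).mpr hsub
  omega

lemma counts_of_iso (A B : Subgraph (⊤ : SimpleGraph ℕ)) (φ : A.coe ≃g B.coe) :
    A.verts.ncard = B.verts.ncard ∧ A.edgeSet.ncard = B.edgeSet.ncard := by
  constructor
  · rw [← Nat.card_coe_set_eq, ← Nat.card_coe_set_eq]
    exact Nat.card_congr φ.toEquiv
  · rw [← A.image_coe_edgeSet_coe, ← B.image_coe_edgeSet_coe,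
      Set.ncard_image_of_injective _ (Sym2.map.injective Subtype.val_injective),
      Set.ncard_image_of_injective _ (Sym2.map.injective Subtype.val_injective),
      ← Nat.card_coe_set_eq, ← Nat.card_coe_set_eq]
    exact Nat.card_congr φ.mapEdgeSet

theorem d2_union_of_two_copies (F : Subgraph (⊤ : SimpleGraph ℕ))
    (hFfin : F.verts.Finite) (hbal : Strictly2Balanced F)
    (F₁ F₂ : Subgraph (⊤ : SimpleGraph ℕ)) (hne : F₁ ≠ F₂)
    (h₁ : Nonempty (F₁.coe ≃g F.coe)) (h₂ : Nonempty (F₂.coe ≃g F.coe))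
    (hint : 2 ≤ (F₁.edgeSet ∩ F₂.edgeSet).ncard) :
    d2 F < d2 (F₁ ⊔ F₂) := by
  obtain ⟨φ⟩ := h₁
  obtain ⟨ψ⟩ := h₂
  obtain ⟨heF, hbal2⟩ := hbal
  obtain ⟨hv1, he1⟩ := counts_of_iso F₁ F φ
  obtain ⟨hv2, he2⟩ := counts_of_iso F₂ F ψ
  have hF1fin : F₁.verts.Finite := by
    have h1 : Finite ↥F.verts := hFfin.to_subtype
    have h2 : Finite ↥F₁.verts := Finite.of_equiv _ φ.toEquiv.symm
    exact Set.finite_coe_iff.mp h2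
  have hF2fin : F₂.verts.Finite := by
    have h1 : Finite ↥F.verts := hFfin.to_subtype
    have h2 : Finite ↥F₂.verts := Finite.of_equiv _ ψ.toEquiv.symm
    exact Set.finite_coe_iff.mp h2
  have hE1fin := edgeSet_finite' F₁ hF1fin
  have hE2fin := edgeSet_finite' F₂ hF2fin
  set I := F₁ ⊓ F₂ with hIdef
  have hIverts : I.verts = F₁.verts ∩ F₂.verts := rfl
  have hIedge : I.edgeSet = F₁.edgeSet ∩ F₂.edgeSet := Subgraph.edgeSet_inf
  have hIvfin : I.verts.Finite := hF1fin.subset (by rw [hIverts]; exact Set.inter_subset_left)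
  have he' : 2 ≤ I.edgeSet.ncard := by rw [hIedge]; exact hint
  have hv'3 : 3 ≤ I.verts.ncard := three_le_verts' I hIvfin he'
  have hv3 : 3 ≤ F.verts.ncard := three_le_verts' F hFfin heF
  have hIle : I ≤ F₁ := inf_le_left
  -- equality from ≤ plus equal counts
  have hEqOf : ∀ A B : Subgraph (⊤ : SimpleGraph ℕ), A ≤ B → B.verts.Finite →
      B.verts.ncard ≤ A.verts.ncard → B.edgeSet.ncard ≤ A.edgeSet.ncard → A = B := by
    intro A B hle hfin hvc hec
    have hvs : A.verts = B.verts := Set.eq_of_subset_of_ncard_le hle.1 hvc hfin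
    have hes : A.edgeSet = B.edgeSet :=
      Set.eq_of_subset_of_ncard_le (Subgraph.edgeSet_mono hle) hec (edgeSet_finite' B hfin)
    refine Subgraph.ext hvs ?_
    funext x y
    exact propext (by rw [← Subgraph.mem_edgeSet, ← Subgraph.mem_edgeSet, hes])
  have hIne : I ≠ F₁ := by
    intro hEq
    apply hne
    have hle : F₁ ≤ F₂ := by rw [← hEq]; exact inf_le_right
    exact hEqOf F₁ F₂ hle hF2fin (by omega) (by omega)
  have hIne' : ¬(I.verts.ncard = F.verts.ncard ∧ I.edgeSet.ncard = F.edgeSet.ncard) := by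
    rintro ⟨hvv, hee⟩
    exact hIne (hEqOf I F₁ hIle hF1fin (by omega) (by omega))
  -- build the image of I inside F
  set R : F₁.coe.Subgraph := F₁.restrict F₂ with hRdef
  have hR : Subgraph.coeSubgraph R = I := Subgraph.coeSubgraph_restrict_eq F₂
  have hφinj : Function.Injective ⇑φ.toHom := fun a b h => φ.toEquiv.injective h
  set M : F.coe.Subgraph := R.map φ.toHom with hMdef
  set F'' := Subgraph.coeSubgraph M with hF''def
  have hle'' : F'' ≤ F := Subgraph.coeSubgraph_le M
  have hIv : I.verts.ncard = R.verts.ncard := by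
    rw [← hR]
    exact Set.ncard_image_of_injective _ Subgraph.hom_injective
  have hIe : I.edgeSet.ncard = R.edgeSet.ncard := by
    rw [← hR, Subgraph.coeSubgraph, edgeSet_map']
    exact Set.ncard_image_of_injective _ (Sym2.map.injective Subgraph.hom_injective)
  have hv'' : F''.verts.ncard = I.verts.ncard := by
    rw [hIv, hF''def, Subgraph.coeSubgraph, Subgraph.map_verts,
      Set.ncard_image_of_injective _ Subgraph.hom_injective, hMdef, Subgraph.map_verts,
      Set.ncard_image_of_injective _ hφinj]
  have he'' : F''.edgeSet.ncard = I.edgeSet.ncard := by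
    rw [hIe, hF''def, Subgraph.coeSubgraph, edgeSet_map',
      Set.ncard_image_of_injective _ (Sym2.map.injective Subgraph.hom_injective), hMdef,
      edgeSet_map', Set.ncard_image_of_injective _ (Sym2.map.injective hφinj)]
  have hne'' : F'' ≠ F := by
    intro hEq
    exact hIne' ⟨by rw [← hv'', hEq], by rw [← he'', hEq]⟩
  have hd : d2 F'' < d2 F :=
    hbal2 F'' hle'' hne'' (Set.nonempty_of_ncard_ne_zero (by omega))
  rw [show d2 F'' = d2v F''.verts.ncard F''.edgeSet.ncard from rfl, hv'', he''] at hd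
  -- counts of the union
  have hHvfin : (F₁ ⊔ F₂).verts.Finite := by
    rw [Subgraph.verts_sup]; exact hF1fin.union hF2fin
  have hHv : (F₁ ⊔ F₂).verts.ncard + I.verts.ncard = F.verts.ncard + F.verts.ncard := by
    have h := Set.ncard_union_add_ncard_inter F₁.verts F₂.verts hF1fin hF2fin
    rw [Subgraph.verts_sup, hIverts]
    omega
  have hHe : (F₁ ⊔ F₂).edgeSet.ncard + I.edgeSet.ncard
      = F.edgeSet.ncard + F.edgeSet.ncard := by
    have h := Set.ncard_union_add_ncard_inter F₁.edgeSet F₂.edgeSet hE1fin hE2fin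
    rw [Subgraph.edgeSet_sup, hIedge]
    omega
  have hv'le : I.verts.ncard ≤ F.verts.ncard := by
    rw [← hv1]
    exact Set.ncard_le_ncard hIle.1 hF1fin
  have hHv3 : 3 ≤ (F₁ ⊔ F₂).verts.ncard := by omega
  -- final arithmetic
  unfold d2 d2v at hd ⊢
  rw [if_pos hv3, if_pos hHv3]
  rw [if_pos hv'3, if_pos hv3] at hd
  set v := F.verts.ncard
  set e := F.edgeSet.ncard
  set v' := I.verts.ncard
  set e' := I.edgeSet.ncard
  set vH := (F₁ ⊔ F₂).verts.ncard
  set eH := (F₁ ⊔ F₂).edgeSet.ncard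
  have hb1 : (0:ℝ) < (v:ℝ) - 2 := by
    have : (3:ℝ) ≤ (v:ℝ) := by exact_mod_cast hv3
    linarith
  have hb2 : (0:ℝ) < (v':ℝ) - 2 := by
    have : (3:ℝ) ≤ (v':ℝ) := by exact_mod_cast hv'3
    linarith
  have hb3 : (0:ℝ) < (vH:ℝ) - 2 := by
    have : (3:ℝ) ≤ (vH:ℝ) := by exact_mod_cast hHv3
    linarith
  rw [div_lt_div_iff₀ hb2 hb1] at hd
  rw [div_lt_div_iff₀ hb1 hb3]
  have hHvr : (vH:ℝ) + (v':ℝ) = (v:ℝ) + (v:ℝ) := by exact_mod_cast hHv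
  have hHer : (eH:ℝ) + (e':ℝ) = (e:ℝ) + (e:ℝ) := by exact_mod_cast hHe
  have key : ((eH:ℝ) - 1) * ((v:ℝ) - 2) - ((e:ℝ) - 1) * ((vH:ℝ) - 2)
      = ((e:ℝ) - 1) * ((v':ℝ) - 2) - ((e':ℝ) - 1) * ((v:ℝ) - 2) := by
    have h1 : (vH:ℝ) = (v:ℝ) + (v:ℝ) - (v':ℝ) := by linarith
    have h2 : (eH:ℝ) = (e:ℝ) + (e:ℝ) - (e':ℝ) := by linarith
    rw [h1, h2]; ring
  linarith
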